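/- Let (W_1,...,W_N) be a critical point of L^N (i.e. all partial gradients ∇_{W_j} L^N vanish), let W = W_N⋯W_1 and k = rank(W). Then for every Z in the tangent space T_W M_k = {W A + B W}, the directional derivative of L^1 at W in direction Z is zero; i.e. W is a critical point of L^1 restricted to M_k. -/

import Mathlib

open Matrix

/-- Cast a matrix along equalities of its (Fin) dimensions. -/
def mcast {a b c e : ℕ} (h1 : a = b) (h2 : c = e) (M : Matrix (Fin a) (Fin c) ℝ) :
    Matrix (Fin b) (Fin e) ℝ :=
  M.submatrix (Fin.cast h1.symm) (Fin.cast h2.symm)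

/-- The product W_{a+k} ⋯ W_{a+1} of `k` consecutive layer matrices starting at layer `a`. -/
def segProd (d : ℕ → ℕ) (W : ∀ i : ℕ, Matrix (Fin (d (i + 1))) (Fin (d i)) ℝ) (a : ℕ) :
    (k : ℕ) → Matrix (Fin (d (a + k))) (Fin (d a)) ℝ
  | 0 => (1 : Matrix (Fin (d a)) (Fin (d a)) ℝ)
  | (k + 1) => W (a + k) * segProd d W a k

/-- The full product W = W_N ⋯ W_1 of all `N` layers. -/
def netProd (N : ℕ) (d : ℕ → ℕ) (W : ∀ i : ℕ, Matrix (Fin (d (i + 1))) (Fin (d i)) ℝ) :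
    Matrix (Fin (d N)) (Fin (d 0)) ℝ :=
  mcast (congrArg d (Nat.zero_add N)) rfl (segProd d W 0 N)

/-- L^N(W_1,…,W_N) = (1/2) ‖Y - W_N⋯W_1 X‖_F². -/
noncomputable def LN (N : ℕ) (d : ℕ → ℕ) (m : ℕ)
    (X : Matrix (Fin (d 0)) (Fin m) ℝ) (Y : Matrix (Fin (d N)) (Fin m) ℝ)
    (W : ∀ i : ℕ, Matrix (Fin (d (i + 1))) (Fin (d i)) ℝ) : ℝ :=
  (1 / 2) * Matrix.trace ((Y - netProd N d W * X) * (Y - netProd N d W * X)ᵀ)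

/-- The loss L¹(W) = (1/2)‖Y - W X‖_F². -/
noncomputable def L1 {dx dy m : ℕ} (X : Matrix (Fin dx) (Fin m) ℝ)
    (Y : Matrix (Fin dy) (Fin m) ℝ) (W : Matrix (Fin dy) (Fin dx) ℝ) : ℝ :=
  (1 / 2) * Matrix.trace ((Y - W * X) * (Y - W * X)ᵀ)

lemma mcast_rfl {a c : ℕ} (h1 : a = a) (h2 : c = c) (M : Matrix (Fin a) (Fin c) ℝ) :
    mcast h1 h2 M = M := rfl

lemma mcast_mcast {a b c p q r : ℕ} (h1 : a = b) (h2 : p = q) (h3 : b = c) (h4 : q = r)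
    (M : Matrix (Fin a) (Fin p) ℝ) :
    mcast h3 h4 (mcast h1 h2 M) = mcast (h1.trans h3) (h2.trans h4) M := rfl

lemma mcast_mul_left {a b c e : ℕ} (h : a = b) (M : Matrix (Fin a) (Fin c) ℝ)
    (P : Matrix (Fin c) (Fin e) ℝ) :
    mcast h rfl (M * P) = mcast h rfl M * P := by
  ext i j; simp [mcast, Matrix.mul_apply]

section
variable (d : ℕ → ℕ) (W : ∀ i : ℕ, Matrix (Fin (d (i + 1))) (Fin (d i)) ℝ)

lemma update_eval {j p : ℕ} (e : p = j) (v : Matrix (Fin (d (j+1))) (Fin (d j)) ℝ) :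
    Function.update W j v p
      = mcast (congrArg (fun i => d (i+1)) e).symm (congrArg d e).symm v := by
  subst e; rw [Function.update_self]; rfl

lemma mul_mcast_W {p q c : ℕ} (e : p = q) (h : d p = d q) (h' : d (p+1) = d (q+1))
    (S : Matrix (Fin (d p)) (Fin c) ℝ) :
    W q * mcast h rfl S = mcast h' rfl (W p * S) := by subst e; rfl

lemma segProd_peel (a k : ℕ) :
    segProd d W a (k+1)
      = mcast (congrArg d (show a+1+k = a+(k+1) by omega)) rfl (segProd d W (a+1) k) * W a := by
  induction k with
  | zero =>
      exact (Matrix.mul_one (W a)).trans (Matrix.one_mul (W a)).symm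
  | succ k ih =>
      rw [show segProd d W a (k+1+1) = W (a+(k+1)) * segProd d W a (k+1) from rfl, ih,
        ← Matrix.mul_assoc,
        mul_mcast_W d W (show a+1+k = a+(k+1) by omega) (congrArg d (by omega))
          (congrArg d (by omega))]
      rfl

lemma segProd_update_high {j : ℕ} (v : Matrix (Fin (d (j+1))) (Fin (d j)) ℝ)
    (a k : ℕ) (h : a + k ≤ j) :
    segProd d (Function.update W j v) a k = segProd d W a k := by
  induction k with
  | zero => rfl
  | succ k ih =>
      rw [show segProd d (Function.update W j v) a (k+1)
            = Function.update W j v (a+k) * segProd d (Function.update W j v) a k from rfl,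
        Function.update_of_ne (by omega), ih (by omega)]
      rfl

lemma segProd_update_low {j : ℕ} (v : Matrix (Fin (d (j+1))) (Fin (d j)) ℝ)
    (a k : ℕ) (h : j < a) :
    segProd d (Function.update W j v) a k = segProd d W a k := by
  induction k with
  | zero => rfl
  | succ k ih =>
      rw [show segProd d (Function.update W j v) a (k+1)
            = Function.update W j v (a+k) * segProd d (Function.update W j v) a k from rfl,
        Function.update_of_ne (by omega), ih]
      rfl

lemma mcast_cancel_top {p q c : ℕ} (e : q = p)
    (v : Matrix (Fin (d (p+1))) (Fin (d p)) ℝ) (S : Matrix (Fin (d q)) (Fin c) ℝ)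
    (h0 : d (q+1) = d (p+1)) (e1 : d (p+1) = d (q+1)) (e2 : d p = d q) (h : d q = d p) :
    mcast h0 rfl (mcast e1 e2 v * S) = v * mcast h rfl S := by subst e; rfl

lemma netProd_top (n : ℕ) (v : Matrix (Fin (d (n+1))) (Fin (d n)) ℝ) :
    netProd (n+1) d (Function.update W n v)
      = v * mcast (congrArg d (Nat.zero_add n)) rfl (segProd d W 0 n) := by
  rw [show netProd (n+1) d (Function.update W n v)
        = mcast (congrArg d (Nat.zero_add (n+1))) rfl
            (Function.update W n v (0+n) * segProd d (Function.update W n v) 0 n) from rfl,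
    segProd_update_high d W v 0 n (by omega),
    update_eval d W (Nat.zero_add n) v,
    mcast_cancel_top d (Nat.zero_add n)]

lemma netProd_bot (n : ℕ) (hn : 1 ≤ n) (v : Matrix (Fin (d 1)) (Fin (d 0)) ℝ) :
    netProd (n+1) d (Function.update W 0 v)
      = mcast (congrArg d (show 1+n = n+1 by omega)) rfl (segProd d W 1 n) * v := by
  rw [show netProd (n+1) d (Function.update W 0 v)
        = mcast (congrArg d (Nat.zero_add (n+1))) rfl
            (segProd d (Function.update W 0 v) 0 (n+1)) from rfl,
    segProd_peel, segProd_update_low d W v 1 n (by omega), Function.update_self,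
    mcast_mul_left, mcast_mcast]
end

lemma hasDerivAt_quad (c0 c1 c2 : ℝ) :
    HasDerivAt (fun t : ℝ => c0 + t * c1 + t ^ 2 * c2) c1 0 := by
  have h1 : HasDerivAt (fun t : ℝ => t * c1) c1 0 := by
    simpa using (hasDerivAt_id (0:ℝ)).mul_const c1
  have h2 : HasDerivAt (fun t : ℝ => t ^ 2 * c2) 0 0 := by
    simpa using (hasDerivAt_pow 2 (0:ℝ)).mul_const c2
  exact (((hasDerivAt_const (0:ℝ) c0).add h1).add h2).congr_deriv (by simp)

lemma hasDerivAt_L1dir {dx dy m : ℕ} (X : Matrix (Fin dx) (Fin m) ℝ)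
    (Y : Matrix (Fin dy) (Fin m) ℝ) (P Z : Matrix (Fin dy) (Fin dx) ℝ) :
    HasDerivAt (fun t : ℝ => L1 X Y (P + t • Z))
      (-(trace ((Y - P * X) * (Z * X)ᵀ))) 0 := by
  have expand : ∀ t : ℝ, L1 X Y (P + t • Z)
      = (1/2) * trace ((Y - P*X) * (Y - P*X)ᵀ)
        + t * (-(trace ((Y - P*X) * (Z*X)ᵀ)))
        + t ^ 2 * ((1/2) * trace ((Z*X) * (Z*X)ᵀ)) := by
    intro t
    have hE : Y - (P + t • Z) * X = (Y - P*X) - t • (Z*X) := by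
      rw [Matrix.add_mul, Matrix.smul_mul]; abel
    have tflip : ∀ (M N : Matrix (Fin dy) (Fin m) ℝ),
        trace (M * Nᵀ) = trace (N * Mᵀ) := fun M N => by
      rw [← Matrix.trace_transpose, Matrix.transpose_mul, Matrix.transpose_transpose]
    have htr1 := tflip (Z*X) Y
    have htr2 := tflip (Z*X) (P*X)
    simp only [L1, hE, Matrix.transpose_sub, Matrix.transpose_smul, Matrix.sub_mul,
      Matrix.mul_sub, Matrix.smul_mul, Matrix.mul_smul, trace_sub, trace_smul, smul_smul,
      smul_eq_mul, htr1, htr2]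
    ring
  exact (hasDerivAt_quad _ _ _).congr_of_eventuallyEq
    (Filter.Eventually.of_forall fun t => expand t)

lemma eq_zero_of_trace_mul_transpose {p q : ℕ} (A : Matrix (Fin p) (Fin q) ℝ)
    (h : trace (A * Aᵀ) = 0) : A = 0 := by
  have h2 : ∑ i, ∑ j, A i j * A i j = 0 := by
    simpa [trace, Matrix.mul_apply, Matrix.diag] using h
  have o1 : ∀ i ∈ (Finset.univ : Finset (Fin p)), (0:ℝ) ≤ ∑ j, A i j * A i j :=
    fun i _ => Finset.sum_nonneg fun j _ => mul_self_nonneg _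
  have e1 := (Finset.sum_eq_zero_iff_of_nonneg o1).mp h2
  ext i j
  have e2 := (Finset.sum_eq_zero_iff_of_nonneg
    (fun j _ => mul_self_nonneg (A i j))).mp (e1 i (Finset.mem_univ i)) j (Finset.mem_univ j)
  simpa using mul_self_eq_zero.mp e2

/-- If (W_1,…,W_N) is a critical point of L^N (all partial directional derivatives vanish),
then W = W_N⋯W_1 is a critical point of L¹ restricted to the manifold of rank-k matrices,
k = rank W: the directional derivative of L¹ at W vanishes in every tangent direction
Z = W A + B W. -/
theorem stmt15 (N : ℕ) (hN : 2 ≤ N) (d : ℕ → ℕ) (m : ℕ)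
    (X : Matrix (Fin (d 0)) (Fin m) ℝ) (Y : Matrix (Fin (d N)) (Fin m) ℝ)
    (W : ∀ i : ℕ, Matrix (Fin (d (i + 1))) (Fin (d i)) ℝ)
    (hcrit : ∀ (j : ℕ), j < N → ∀ V : Matrix (Fin (d (j + 1))) (Fin (d j)) ℝ,
      HasDerivAt (fun t : ℝ => LN N d m X Y (Function.update W j (W j + t • V))) 0 0)
    (k : ℕ) (hk : (netProd N d W).rank = k) :
    ∀ (A : Matrix (Fin (d 0)) (Fin (d 0)) ℝ) (B : Matrix (Fin (d N)) (Fin (d N)) ℝ),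
      HasDerivAt
        (fun t : ℝ =>
          L1 X Y (netProd N d W + t • (netProd N d W * A + B * netProd N d W))) 0 0 := by
  obtain ⟨n, rfl⟩ : ∃ n, N = n + 1 := ⟨N - 1, by omega⟩
  have hn : 1 ≤ n := by omega
  set Qc : Matrix (Fin (d n)) (Fin (d 0)) ℝ :=
    mcast (congrArg d (Nat.zero_add n)) rfl (segProd d W 0 n) with hQc
  set Rc : Matrix (Fin (d (n+1))) (Fin (d 1)) ℝ :=
    mcast (congrArg d (show 1+n = n+1 by omega)) rfl (segProd d W 1 n) with hRc
  have hWtop : netProd (n+1) d W = W n * Qc := by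
    conv_lhs => rw [← Function.update_eq_self n W]
    rw [netProd_top d W n (W n)]
  have hWbot : netProd (n+1) d W = Rc * W 0 := by
    conv_lhs => rw [← Function.update_eq_self 0 W]
    rw [netProd_bot d W n hn (W 0)]
  set E : Matrix (Fin (d (n+1))) (Fin m) ℝ := Y - netProd (n+1) d W * X with hE
  -- criticality in the top layer
  have htop : ∀ v : Matrix (Fin (d (n+1))) (Fin (d n)) ℝ,
      trace (E * (v * (Qc * X))ᵀ) = 0 := by
    intro v
    have h1 := hcrit n (by omega) v
    have h2 : (fun t : ℝ => LN (n+1) d m X Y (Function.update W n (W n + t • v)))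
        = fun t : ℝ => L1 (Qc * X) Y (W n + t • v) := by
      funext t
      rw [LN, L1, netProd_top d W n (W n + t • v), Matrix.mul_assoc]
    rw [h2] at h1
    have h4 := (hasDerivAt_L1dir (Qc * X) Y (W n) v).unique h1
    have h5 : Y - W n * (Qc * X) = E := by rw [hE, hWtop, Matrix.mul_assoc]
    rw [h5] at h4
    exact neg_eq_zero.mp h4
  -- criticality in the bottom layer
  have hbot : ∀ v : Matrix (Fin (d 1)) (Fin (d 0)) ℝ,
      trace (E * ((Rc * v) * X)ᵀ) = 0 := by
    intro v
    have h1 := hcrit 0 (by omega) v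
    have h2 : (fun t : ℝ => LN (n+1) d m X Y (Function.update W 0 (W 0 + t • v)))
        = fun t : ℝ => L1 X Y (Rc * W 0 + t • (Rc * v)) := by
      funext t
      rw [LN, L1, netProd_bot d W n hn (W 0 + t • v), Matrix.mul_add, Matrix.mul_smul]
    rw [h2] at h1
    have h4 := (hasDerivAt_L1dir X Y (Rc * W 0) (Rc * v)).unique h1
    rw [← hWbot, ← hE] at h4
    exact neg_eq_zero.mp h4
  -- the two vanishing conditions
  have hC1 : E * (Qc * X)ᵀ = 0 := by
    apply eq_zero_of_trace_mul_transpose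
    have h := htop (E * (Qc * X)ᵀ)
    rwa [Matrix.transpose_mul (E * (Qc * X)ᵀ) (Qc * X), ← Matrix.mul_assoc] at h
  have hC2 : Rcᵀ * (E * Xᵀ) = 0 := by
    apply eq_zero_of_trace_mul_transpose
    have h := hbot (Rcᵀ * (E * Xᵀ))
    -- trace (E * ((Rc * v) * X)ᵀ) = trace ((Rcᵀ * (E * Xᵀ)) * vᵀ)
    rw [Matrix.transpose_mul (Rc * (Rcᵀ * (E * Xᵀ))) X,
      Matrix.transpose_mul Rc (Rcᵀ * (E * Xᵀ)),
      ← Matrix.mul_assoc E Xᵀ, ← Matrix.mul_assoc (E * Xᵀ),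
      trace_mul_comm, ← Matrix.mul_assoc Rcᵀ (E * Xᵀ)] at h
    exact h
  intro A B
  have hPX : E * (netProd (n+1) d W * X)ᵀ = 0 := by
    rw [hWtop, Matrix.mul_assoc, Matrix.transpose_mul (W n) (Qc * X),
      ← Matrix.mul_assoc, hC1, Matrix.zero_mul]
  have hXP : (netProd (n+1) d W)ᵀ * (E * Xᵀ) = 0 := by
    rw [hWbot, Matrix.transpose_mul Rc (W 0), Matrix.mul_assoc, hC2, Matrix.mul_zero]
  have key : trace (E * ((netProd (n+1) d W * A + B * netProd (n+1) d W) * X)ᵀ) = 0 := by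
    have hZX : (netProd (n+1) d W * A + B * netProd (n+1) d W) * X
        = netProd (n+1) d W * (A * X) + B * (netProd (n+1) d W * X) := by
      rw [Matrix.add_mul, Matrix.mul_assoc, Matrix.mul_assoc]
    rw [hZX, Matrix.transpose_add, Matrix.mul_add, trace_add,
      Matrix.transpose_mul (netProd (n+1) d W) (A*X),
      Matrix.transpose_mul B (netProd (n+1) d W * X)]
    have t2 : trace (E * ((netProd (n+1) d W * X)ᵀ * Bᵀ)) = 0 := by
      rw [← Matrix.mul_assoc, hPX, Matrix.zero_mul, trace_zero]
    have t1 : trace (E * ((A*X)ᵀ * (netProd (n+1) d W)ᵀ)) = 0 := by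
      rw [← Matrix.mul_assoc E, trace_mul_comm, Matrix.transpose_mul A X,
        ← Matrix.mul_assoc E Xᵀ, ← Matrix.mul_assoc (netProd (n+1) d W)ᵀ (E * Xᵀ),
        hXP, Matrix.zero_mul, trace_zero]
    rw [t1, t2, add_zero]
  have hD := hasDerivAt_L1dir X Y (netProd (n+1) d W)
    (netProd (n+1) d W * A + B * netProd (n+1) d W)
  rw [← hE, key, neg_zero] at hD
  exact hD
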